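/- arXiv:0711.0605 — 5 statements merged into one kernel-verified Lean document; each statement's English description precedes it below -/
import Mathlib

section
/- Let H(ξ) be the 4×4 matrix with rows (0, 2ξ₂, 0, 0), (2ξ₂, 2ξ₁+2ξ₄², −2ξ₄, 4ξ₂ξ₄−2ξ₃), (0, −2ξ₄, 2, −2ξ₂), (0, 4ξ₂ξ₄−2ξ₃, −2ξ₂, 2ξ₂²) over ℂ. Then for every ξ ∈ ℂ⁴, rank H(ξ) ≤ 3, and there exists ξ with rank H(ξ) = 3. -/
/-- The explicit 4×4 matrix `H(ξ)` (the Hessian of `ψ(ξ) = ξ₁ξ₂² + (ξ₃ − ξ₂ξ₄)²`). -/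
def H (ξ : Fin 4 → ℂ) : Matrix (Fin 4) (Fin 4) ℂ :=
  !![0,      2 * ξ 1,                    0,       0;
     2 * ξ 1, 2 * ξ 0 + 2 * (ξ 3) ^ 2,  -2 * ξ 3, 4 * ξ 1 * ξ 3 - 2 * ξ 2;
     0,      -2 * ξ 3,                   2,      -2 * ξ 1;
     0,       4 * ξ 1 * ξ 3 - 2 * ξ 2,  -2 * ξ 1, 2 * (ξ 1) ^ 2]

open Matrix Module in
lemma aux_rank_le_of_det_eq_zero (A : Matrix (Fin 4) (Fin 4) ℂ) (h : A.det = 0) :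
    A.rank ≤ 3 := by
  obtain ⟨v, hv, hAv⟩ := Matrix.exists_mulVec_eq_zero_iff.mpr h
  have hker : v ∈ LinearMap.ker A.mulVecLin := by simpa using hAv
  have hne : LinearMap.ker A.mulVecLin ≠ ⊥ := by
    intro hb
    exact hv (by simpa [hb] using hker)
  have h1 : finrank ℂ (LinearMap.ker A.mulVecLin) ≠ 0 := by
    intro h0
    exact hne (Submodule.finrank_eq_zero.mp h0)
  have hrn := LinearMap.finrank_range_add_finrank_ker A.mulVecLin
  have hdom : finrank ℂ (Fin 4 → ℂ) = 4 := by simp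
  rw [hdom] at hrn
  have : A.rank = finrank ℂ (LinearMap.range A.mulVecLin) := rfl
  omega

lemma aux_detH (ξ : Fin 4 → ℂ) : (H ξ).det = 0 := by
  simp [H, Matrix.det_succ_row_zero, Fin.sum_univ_succ, Fin.succAbove]
  right; ring

lemma aux_exH : H ![0,1,0,0] =
    !![0,1,0,0;1,0,0,0;0,0,1,0;0,0,-1,1] *
      (Matrix.diagonal ![2,2,2,0] * !![1,0,0,0;0,1,0,0;0,0,1,-1;0,0,0,1]) := by
  ext i j
  fin_cases i <;> fin_cases j <;>
    simp [H, Matrix.mul_apply, Fin.sum_univ_four, Matrix.diagonal,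
      Matrix.vecHead, Matrix.vecTail]

theorem stmt_4 : (∀ ξ : Fin 4 → ℂ, (H ξ).rank ≤ 3) ∧ (∃ ξ : Fin 4 → ℂ, (H ξ).rank = 3) := by
  constructor
  · intro ξ
    exact aux_rank_le_of_det_eq_zero _ (aux_detH ξ)
  · refine ⟨![0,1,0,0], ?_⟩
    rw [aux_exH]
    have hP : IsUnit (!![0,1,0,0;1,0,0,0;0,0,1,0;0,0,-1,1] : Matrix (Fin 4) (Fin 4) ℂ).det := by
      have : (!![0,1,0,0;1,0,0,0;0,0,1,0;0,0,-1,1] : Matrix (Fin 4) (Fin 4) ℂ).det = -1 := by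
        simp [Matrix.det_succ_row_zero, Fin.sum_univ_succ, Fin.succAbove]
      rw [this]
      exact isUnit_one.neg
    have hQ : IsUnit (!![1,0,0,0;0,1,0,0;0,0,1,-1;0,0,0,1] : Matrix (Fin 4) (Fin 4) ℂ).det := by
      have : (!![1,0,0,0;0,1,0,0;0,0,1,-1;0,0,0,1] : Matrix (Fin 4) (Fin 4) ℂ).det = 1 := by
        simp [Matrix.det_succ_row_zero, Fin.sum_univ_succ, Fin.succAbove]
      rw [this]
      exact isUnit_one
    rw [Matrix.rank_mul_eq_right_of_isUnit_det _ _ hP,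
        Matrix.rank_mul_eq_left_of_isUnit_det _ _ hQ,
        Matrix.rank_diagonal]
    have h : ∀ i : Fin 4, ![(2:ℂ),2,2,0] i ≠ 0 ↔ i ≠ 3 := by
      intro i
      fin_cases i <;> simp
    rw [Fintype.card_congr (Equiv.subtypeEquivRight h)]
    simp [Fintype.card_subtype_compl]
end

section
/- Let H(ξ) be the Hessian of ψ(ξ) = ξ₁ξ₂² + (ξ₃ − ξ₂ξ₄)² on ℂ⁴ and suppose ξ₂ ≠ 0. Then the kernel of H(ξ) (as a linear map ℂ⁴ → ℂ⁴) is the one-dimensional span of the vector (ξ₃/ξ₂ − ξ₄, 0, ξ₂, 1). -/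
theorem stmt_6 (ξ : Fin 4 → ℂ) (hξ : ξ 1 ≠ 0) :
    {u : Fin 4 → ℂ | (H ξ).mulVec u = 0} =
      ↑(Submodule.span ℂ {![ξ 2 / ξ 1 - ξ 3, 0, ξ 1, 1]}) ∧
    Module.finrank ℂ (Submodule.span ℂ ({![ξ 2 / ξ 1 - ξ 3, 0, ξ 1, 1]} :
      Set (Fin 4 → ℂ))) = 1 := by
  have hv : (![ξ 2 / ξ 1 - ξ 3, 0, ξ 1, 1] : Fin 4 → ℂ) ≠ 0 := by
    intro h
    have := congrFun h 3
    simp at this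
  constructor
  · ext u
    simp only [Set.mem_setOf_eq, SetLike.mem_coe, Submodule.mem_span_singleton]
    constructor
    · intro h
      have h0 := congrFun h 0
      have h1 := congrFun h 1
      have h2 := congrFun h 2
      simp [H, Matrix.mulVec, dotProduct, Fin.sum_univ_four] at h0 h1 h2
      have hu1 : u 1 = 0 := by
        rcases h0 with h | h
        · exact absurd h hξ
        · exact h
      have hu2 : u 2 = ξ 1 * u 3 := by
        rw [hu1] at h2; linear_combination h2 / 2
      refine ⟨u 3, ?_⟩
      funext i
      fin_cases i
      · simp only [Pi.smul_apply, Fin.zero_eta, Matrix.cons_val_zero, smul_eq_mul]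
        rw [hu1, hu2] at h1
        field_simp
        ring_nf
        ring_nf at h1
        linear_combination -h1 / 2
      · simpa using hu1.symm
      · simp only [Pi.smul_apply, smul_eq_mul]
        simp [hu2]; ring
      · simp
    · rintro ⟨c, rfl⟩
      funext i
      fin_cases i <;>
          simp [H, Matrix.mulVec, dotProduct, Fin.sum_univ_four] <;>
          (try field_simp) <;> ring
  · rw [finrank_span_singleton hv]
end

section
/- Define ψ(ξ) = ξ₁ξ₂² + (ξ₃ − ξ₂ξ₄)² on ℂ⁴ and Γ = ∇ψ. For every ξ with ξ₂ ≠ 0, the vector v(ξ) = (ξ₃/ξ₂ − ξ₄, 0, ξ₂, 1) satisfies: Γ(ξ + t·v(ξ)) = Γ(ξ) for all t ∈ ℂ, i.e. the line through ξ in direction v(ξ) lies in the level set of Γ through ξ. -/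
/-- The (complex) gradient of `ψ` at `ξ`. -/
noncomputable def grad {n : ℕ} (ψ : (Fin n → ℂ) → ℂ) (ξ : Fin n → ℂ) : Fin n → ℂ :=
  fun i => fderiv ℂ ψ ξ (Pi.single i 1)

private lemma hasFDerivAt_psi (ξ : Fin 4 → ℂ) :
    HasFDerivAt (fun ξ : Fin 4 → ℂ => ξ 0 * (ξ 1) ^ 2 + (ξ 2 - ξ 1 * ξ 3) ^ 2)
      ((ξ 1 ^ 2) • ContinuousLinearMap.proj (R := ℂ) (φ := fun _ : Fin 4 => ℂ) 0 +
        (2 * ξ 0 * ξ 1 - 2 * ξ 3 * (ξ 2 - ξ 1 * ξ 3)) • ContinuousLinearMap.proj (R := ℂ) (φ := fun _ : Fin 4 => ℂ) 1 +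
        (2 * (ξ 2 - ξ 1 * ξ 3)) • ContinuousLinearMap.proj (R := ℂ) (φ := fun _ : Fin 4 => ℂ) 2 +
        (-(2 * ξ 1 * (ξ 2 - ξ 1 * ξ 3))) • ContinuousLinearMap.proj (R := ℂ) (φ := fun _ : Fin 4 => ℂ) 3) ξ := by
  have h : ∀ i : Fin 4, HasFDerivAt (fun ξ : Fin 4 → ℂ => ξ i)
      (ContinuousLinearMap.proj (R := ℂ) (φ := fun _ : Fin 4 => ℂ) i) ξ :=
    fun i => (ContinuousLinearMap.proj (R := ℂ) (φ := fun _ : Fin 4 => ℂ) i).hasFDerivAt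
  have h2 := ((h 2).sub ((h 1).mul (h 3)))
  have := (((h 0).mul ((h 1).mul (h 1))).add (h2.mul h2))
  refine HasFDerivAt.congr_of_eventuallyEq (this.congr_fderiv ?_) (Filter.EventuallyEq.of_eq ?_)
  · ext v
    simp [ContinuousLinearMap.smul_apply]
    ring
  · funext x; simp only [Pi.add_apply, Pi.mul_apply, Pi.sub_apply]; ring

private lemma grad_psi (ξ : Fin 4 → ℂ) :
    grad (fun ξ => ξ 0 * (ξ 1) ^ 2 + (ξ 2 - ξ 1 * ξ 3) ^ 2) ξ =
      ![ξ 1 ^ 2, 2 * ξ 0 * ξ 1 - 2 * ξ 3 * (ξ 2 - ξ 1 * ξ 3),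
        2 * (ξ 2 - ξ 1 * ξ 3), -(2 * ξ 1 * (ξ 2 - ξ 1 * ξ 3))] := by
  funext i
  have h := (hasFDerivAt_psi ξ).fderiv
  unfold grad
  rw [h]
  fin_cases i <;>
    simp [ContinuousLinearMap.proj_apply, Pi.single_apply] <;>
    norm_num [Fin.ext_iff]

theorem stmt_7 (ξ : Fin 4 → ℂ) (hξ : ξ 1 ≠ 0) (t : ℂ) :
    grad (fun ξ => ξ 0 * (ξ 1) ^ 2 + (ξ 2 - ξ 1 * ξ 3) ^ 2)
        (ξ + t • ![ξ 2 / ξ 1 - ξ 3, 0, ξ 1, 1]) =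
      grad (fun ξ => ξ 0 * (ξ 1) ^ 2 + (ξ 2 - ξ 1 * ξ 3) ^ 2) ξ := by
  rw [grad_psi, grad_psi]
  funext i
  fin_cases i <;>
    simp <;>
    (try field_simp) <;>
    (try ring) <;>
    tauto
end

section
/- Fix integers k, m ≥ 2 and define ψ(ξ) = ξ₁ξ₂ᵏ + (ξ₃ − ξ₂ξ₄)ᵐ on ℂ⁴ and Γ = ∇ψ. For every ξ with ξ₂ ≠ 0, the vector v(ξ) = ((m/k)·(ξ₃ − ξ₂ξ₄)^{m−1}/ξ₂^{k−1}, 0, ξ₂, 1) satisfies Γ(ξ + t·v(ξ)) = Γ(ξ) for all t ∈ ℂ. -/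
lemma grad_eq (k m : ℕ) (ξ : Fin 4 → ℂ) :
    grad (fun ξ => ξ 0 * (ξ 1) ^ k + (ξ 2 - ξ 1 * ξ 3) ^ m) ξ =
      ![(ξ 1) ^ k,
        (k : ℂ) * ξ 0 * (ξ 1) ^ (k - 1) - (m : ℂ) * ξ 3 * (ξ 2 - ξ 1 * ξ 3) ^ (m - 1),
        (m : ℂ) * (ξ 2 - ξ 1 * ξ 3) ^ (m - 1),
        -((m : ℂ) * ξ 1 * (ξ 2 - ξ 1 * ξ 3) ^ (m - 1))] := by
  have h0 : HasFDerivAt (𝕜 := ℂ) (fun x : Fin 4 → ℂ => x 0) (ContinuousLinearMap.proj 0) ξ :=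
    hasFDerivAt_apply 0 ξ
  have h1 : HasFDerivAt (𝕜 := ℂ) (fun x : Fin 4 → ℂ => x 1) (ContinuousLinearMap.proj (1 : Fin 4)) ξ :=
    hasFDerivAt_apply 1 ξ
  have h2 : HasFDerivAt (𝕜 := ℂ) (fun x : Fin 4 → ℂ => x 2) (ContinuousLinearMap.proj (2 : Fin 4)) ξ :=
    hasFDerivAt_apply 2 ξ
  have h3 : HasFDerivAt (𝕜 := ℂ) (fun x : Fin 4 → ℂ => x 3) (ContinuousLinearMap.proj (3 : Fin 4)) ξ :=
    hasFDerivAt_apply 3 ξ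
  have hp1 : HasFDerivAt (fun x : Fin 4 → ℂ => (x 1) ^ k)
      (((k : ℂ) * (ξ 1) ^ (k - 1)) • (ContinuousLinearMap.proj (1 : Fin 4) :
        (Fin 4 → ℂ) →L[ℂ] ℂ)) ξ :=
    HasDerivAt.comp_hasFDerivAt ξ (hasDerivAt_pow k (ξ 1)) h1
  have hu : HasFDerivAt (fun x : Fin 4 → ℂ => x 2 - x 1 * x 3)
      (ContinuousLinearMap.proj (2 : Fin 4) - (ξ 1 • ContinuousLinearMap.proj (3 : Fin 4) +
        ξ 3 • ContinuousLinearMap.proj (1 : Fin 4))) ξ := h2.sub (h1.mul h3)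
  have hp2 : HasFDerivAt (fun x : Fin 4 → ℂ => (x 2 - x 1 * x 3) ^ m)
      (((m : ℂ) * (ξ 2 - ξ 1 * ξ 3) ^ (m - 1)) • (ContinuousLinearMap.proj (2 : Fin 4) -
        (ξ 1 • ContinuousLinearMap.proj (3 : Fin 4) + ξ 3 • ContinuousLinearMap.proj (1 : Fin 4)))) ξ :=
    HasDerivAt.comp_hasFDerivAt ξ (hasDerivAt_pow m (ξ 2 - ξ 1 * ξ 3)) hu
  have h := (h0.mul hp1).add hp2
  funext i
  show fderiv ℂ _ ξ (Pi.single i 1) = _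
  rw [HasFDerivAt.fderiv (f := fun ξ : Fin 4 → ℂ => ξ 0 * ξ 1 ^ k + (ξ 2 - ξ 1 * ξ 3) ^ m) h]
  fin_cases i <;>
    simp [Pi.single_apply] <;> ring

theorem stmt_10 (k m : ℕ) (hk : 2 ≤ k) (hm : 2 ≤ m) (ξ : Fin 4 → ℂ) (hξ : ξ 1 ≠ 0) (t : ℂ) :
    grad (fun ξ => ξ 0 * (ξ 1) ^ k + (ξ 2 - ξ 1 * ξ 3) ^ m)
        (ξ + t • ![(m : ℂ) / (k : ℂ) * (ξ 2 - ξ 1 * ξ 3) ^ (m - 1) / (ξ 1) ^ (k - 1),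
          0, ξ 1, 1]) =
      grad (fun ξ => ξ 0 * (ξ 1) ^ k + (ξ 2 - ξ 1 * ξ 3) ^ m) ξ := by
  set ξ' := ξ + t • ![(m : ℂ) / (k : ℂ) * (ξ 2 - ξ 1 * ξ 3) ^ (m - 1) / (ξ 1) ^ (k - 1),
      0, ξ 1, 1] with hξ'
  have e0 : ξ' 0 = ξ 0 + t * ((m : ℂ) / (k : ℂ) * (ξ 2 - ξ 1 * ξ 3) ^ (m - 1) / (ξ 1) ^ (k - 1)) := by
    simp only [hξ', Pi.add_apply, Pi.smul_apply, Matrix.cons_val_zero, smul_eq_mul]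
  have e1 : ξ' 1 = ξ 1 := by
    simp only [hξ', Pi.add_apply, Pi.smul_apply, Matrix.cons_val_one, Matrix.head_cons,
      smul_eq_mul, mul_zero, add_zero, Matrix.cons_val_zero]
  have e2 : ξ' 2 = ξ 2 + t * ξ 1 := by
    simp only [hξ', Pi.add_apply, Pi.smul_apply, smul_eq_mul]
    norm_num [Matrix.cons_val_two, Matrix.cons_val_three, Matrix.tail_cons, Matrix.head_cons]
  have e3 : ξ' 3 = ξ 3 + t := by
    simp only [hξ', Pi.add_apply, Pi.smul_apply, smul_eq_mul]
    norm_num [Matrix.cons_val_two, Matrix.cons_val_three, Matrix.tail_cons, Matrix.head_cons]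
  rw [grad_eq, grad_eq, e0, e1, e2, e3]
  have hu : ξ 2 + t * ξ 1 - ξ 1 * (ξ 3 + t) = ξ 2 - ξ 1 * ξ 3 := by ring
  rw [hu]
  have hk0 : (k : ℂ) ≠ 0 := Nat.cast_ne_zero.2 (by omega)
  have hp : (ξ 1) ^ (k - 1) ≠ 0 := pow_ne_zero _ hξ
  funext i
  fin_cases i
  · rfl
  · show (k : ℂ) * (ξ 0 + t * ((m : ℂ) / (k : ℂ) * (ξ 2 - ξ 1 * ξ 3) ^ (m - 1) / (ξ 1) ^ (k - 1)))
        * (ξ 1) ^ (k - 1) - (m : ℂ) * (ξ 3 + t) * (ξ 2 - ξ 1 * ξ 3) ^ (m - 1) = _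
    change _ = (k : ℂ) * ξ 0 * (ξ 1) ^ (k - 1) - (m : ℂ) * ξ 3 * (ξ 2 - ξ 1 * ξ 3) ^ (m - 1)
    field_simp
    ring
  · rfl
  · rfl
end

section
/- Define ψ(x,y,z,v,w,s,t) = xy² + sv² + (z − yw − vt)² on ℂ⁷ and Γ = ∇ψ. For every point ξ with y ≠ 0 and v ≠ 0, Γ is constant along the 2-dimensional affine plane ξ + span(u₁, u₂), where u₁ = ((z−yw−vt)/y, 0, y, 0, 1, 0, 0) and u₂ = (0, 0, v, 0, 0, (z−yw−vt)/v, 1) in coordinates (x,y,z,v,w,s,t): for all a, b ∈ ℂ, Γ(ξ + a·u₁ + b·u₂) = Γ(ξ). -/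
/-- `ψ(x,y,z,v,w,s,t) = xy² + sv² + (z − yw − vt)²` in coordinates
`(x,y,z,v,w,s,t) = (ξ 0, ξ 1, ξ 2, ξ 3, ξ 4, ξ 5, ξ 6)`. -/
noncomputable def ψ (ξ : Fin 7 → ℂ) : ℂ :=
  ξ 0 * (ξ 1) ^ 2 + ξ 5 * (ξ 3) ^ 2 + (ξ 2 - ξ 1 * ξ 4 - ξ 3 * ξ 6) ^ 2

lemma vec0 (a0 a1 a2 a3 a4 a5 a6 : ℂ) : ![a0,a1,a2,a3,a4,a5,a6] (0:Fin 7) = a0 := rfl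
lemma vec1 (a0 a1 a2 a3 a4 a5 a6 : ℂ) : ![a0,a1,a2,a3,a4,a5,a6] (1:Fin 7) = a1 := rfl
lemma vec2 (a0 a1 a2 a3 a4 a5 a6 : ℂ) : ![a0,a1,a2,a3,a4,a5,a6] (2:Fin 7) = a2 := rfl
lemma vec3 (a0 a1 a2 a3 a4 a5 a6 : ℂ) : ![a0,a1,a2,a3,a4,a5,a6] (3:Fin 7) = a3 := rfl
lemma vec4 (a0 a1 a2 a3 a4 a5 a6 : ℂ) : ![a0,a1,a2,a3,a4,a5,a6] (4:Fin 7) = a4 := rfl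
lemma vec5 (a0 a1 a2 a3 a4 a5 a6 : ℂ) : ![a0,a1,a2,a3,a4,a5,a6] (5:Fin 7) = a5 := rfl
lemma vec6 (a0 a1 a2 a3 a4 a5 a6 : ℂ) : ![a0,a1,a2,a3,a4,a5,a6] (6:Fin 7) = a6 := rfl

lemma hasF (ξ : Fin 7 → ℂ) :
    HasFDerivAt ψ
      (((ξ 1)^2) • ContinuousLinearMap.proj 0
        + ((ξ 0 * (2 * ξ 1))) • ContinuousLinearMap.proj 1
        + (ξ 3 ^ 2) • (ContinuousLinearMap.proj 5 : (Fin 7 → ℂ) →L[ℂ] ℂ)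
        + (ξ 5 * (2 * ξ 3)) • ContinuousLinearMap.proj 3
        + (2 * (ξ 2 - ξ 1 * ξ 4 - ξ 3 * ξ 6)) •
          ((ContinuousLinearMap.proj 2
            - (ξ 4 • ContinuousLinearMap.proj 1 + ξ 1 • ContinuousLinearMap.proj 4)
            - (ξ 6 • ContinuousLinearMap.proj 3 + ξ 3 • ContinuousLinearMap.proj 6)))) ξ := by
  have p := fun i : Fin 7 => hasFDerivAt_apply (𝕜 := ℂ) i ξ
  have h1 := (p 0).mul ((p 1).mul (p 1))
  have h2 := (p 5).mul ((p 3).mul (p 3))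
  have q := ((p 2).sub ((p 1).mul (p 4))).sub ((p 3).mul (p 6))
  have h3 := q.mul q
  have H := (h1.add h2).add h3
  refine HasFDerivAt.congr_fderiv (H.congr_of_eventuallyEq (Filter.Eventually.of_forall fun η => ?_)) ?_
  · simp [ψ]; ring
  · apply ContinuousLinearMap.ext; intro η; simp [smul_eq_mul]; ring

lemma grad_ψ (ξ : Fin 7 → ℂ) : grad ψ ξ =
    ![ξ 1 ^ 2,
      2 * ξ 0 * ξ 1 - 2 * ξ 4 * (ξ 2 - ξ 1 * ξ 4 - ξ 3 * ξ 6),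
      2 * (ξ 2 - ξ 1 * ξ 4 - ξ 3 * ξ 6),
      2 * ξ 5 * ξ 3 - 2 * ξ 6 * (ξ 2 - ξ 1 * ξ 4 - ξ 3 * ξ 6),
      -(2 * ξ 1 * (ξ 2 - ξ 1 * ξ 4 - ξ 3 * ξ 6)),
      ξ 3 ^ 2,
      -(2 * ξ 3 * (ξ 2 - ξ 1 * ξ 4 - ξ 3 * ξ 6))] := by
  funext i
  have h := (hasF ξ).fderiv
  simp only [grad, h]
  fin_cases i <;>
    · simp (config := {decide := true}) [Pi.single_apply, smul_eq_mul,
        vec0, vec1, vec2, vec3, vec4, vec5, vec6]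
      try ring

theorem stmt_16 (ξ : Fin 7 → ℂ) (hy : ξ 1 ≠ 0) (hv : ξ 3 ≠ 0) (a b : ℂ) :
    grad ψ (ξ + a • ![(ξ 2 - ξ 1 * ξ 4 - ξ 3 * ξ 6) / ξ 1, 0, ξ 1, 0, 1, 0, 0]
              + b • ![0, 0, ξ 3, 0, 0, (ξ 2 - ξ 1 * ξ 4 - ξ 3 * ξ 6) / ξ 3, 1]) =
      grad ψ ξ := by
  rw [grad_ψ, grad_ψ]
  funext i
  fin_cases i <;>
    · simp only [Pi.add_apply, Pi.smul_apply, smul_eq_mul, Fin.reduceFinMk,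
        vec0, vec1, vec2, vec3, vec4, vec5, vec6]
      try field_simp
      try ring
end
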